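/- arXiv:2509.17067 — 2 statements merged into one kernel-verified Lean document; each statement's English description precedes it below -/
import Mathlib

section
/- Tail-moment bound for the sample maximum: assume E[X⁻] < ∞, the upper quantile function g(p) = inf{r : P(X ≥ r) < p} is slowly varying at 0 with g(p) → +∞ as p → 0+. Then for every integer q ≥ 1 and every s > 0 there exists N such that for all n ≥ N and all α > 2^q, P(|M_n|^q ≥ α · g(1/n)^q) ≤ (α^{1/q}/2)^{−s} + (E[X⁻]/α^{1/q})^s. -/
open MeasureTheory ProbabilityTheory Filter

/-- Upper quantile function of a distribution `ν` on `ℝ`: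
`g p = inf {r : P(X ≥ r) < p}`. -/
noncomputable def upperQuantile (ν : MeasureTheory.Measure ℝ) (p : ℝ) : ℝ :=
  sInf {r : ℝ | (ν (Set.Ici r)).toReal < p}

/-- A function `g` is slowly varying at `0`. -/
def SlowlyVaryingAtZero (g : ℝ → ℝ) : Prop :=
  ∀ x > 0, Tendsto (fun t => g (t * x) / g t) (nhdsWithin 0 (Set.Ioi 0)) (nhds 1)

lemma upperQuantile_spec {ν : MeasureTheory.Measure ℝ} [IsProbabilityMeasure ν] {p r : ℝ}
    (hp : 0 < p) (h : upperQuantile ν p < r) : (ν (Set.Ici r)).toReal < p := by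
  have hne : {r : ℝ | (ν (Set.Ici r)).toReal < p}.Nonempty := by
    have htend : Tendsto (fun n : ℕ => ν (Set.Ici (n : ℝ))) atTop
        (nhds (ν (⋂ n : ℕ, Set.Ici (n : ℝ)))) :=
      tendsto_measure_iInter_atTop (fun n => measurableSet_Ici.nullMeasurableSet)
        (fun a b hab => Set.Ici_subset_Ici.2 (by exact_mod_cast hab)) ⟨0, measure_ne_top ν _⟩
    have hempty : (⋂ n : ℕ, Set.Ici (n : ℝ)) = ∅ := by
      ext x
      simp only [Set.mem_iInter, Set.mem_Ici, Set.mem_empty_iff_false, iff_false, not_forall,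
        not_le]
      obtain ⟨n, hn⟩ := exists_nat_gt x
      exact ⟨n, hn⟩
    rw [hempty, measure_empty] at htend
    obtain ⟨n, hn⟩ := (htend.eventually_lt_const
      (show (0 : ENNReal) < ENNReal.ofReal p from ENNReal.ofReal_pos.2 hp)).exists
    exact ⟨n, ENNReal.toReal_lt_of_lt_ofReal hn⟩
  obtain ⟨r', hr', hlt⟩ := exists_lt_of_csInf_lt hne h
  calc (ν (Set.Ici r)).toReal ≤ (ν (Set.Ici r')).toReal :=
        ENNReal.toReal_mono (measure_ne_top ν _) (measure_mono (Set.Ici_subset_Ici.2 hlt.le))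
    _ < p := hr'

set_option maxHeartbeats 1000000 in
/-- Tail-moment bound for the sample maximum: if `E[X⁻] < ∞` and the upper
quantile function `g` is slowly varying at `0` with `g(0+) = +∞`, then for any
`q ≥ 1` and `s > 0`, for all large `n` and all `α > 2^q`,
`P(|Mₙ|^q ≥ α g(1/n)^q) ≤ (α^{1/q}/2)^{-s} + (E[X⁻]/α^{1/q})^s`. -/
theorem sampleMax_tail_moment_bound
    {Ω : Type*} [MeasurableSpace Ω] (μ : Measure Ω) [IsProbabilityMeasure μ]
    (ν : Measure ℝ) [IsProbabilityMeasure ν]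
    (X : ℕ → Ω → ℝ) (hmeas : ∀ k, Measurable (X k))
    (hindep : iIndepFun X μ)
    (hlaw : ∀ k, Measure.map (X k) μ = ν)
    (hneg : Integrable (fun x => max (-x) 0) ν)
    (hsv : SlowlyVaryingAtZero (upperQuantile ν))
    (hinfty : Tendsto (upperQuantile ν) (nhdsWithin 0 (Set.Ioi 0)) atTop) :
    ∀ q : ℕ, 1 ≤ q → ∀ s > (0 : ℝ), ∃ N : ℕ, ∀ n ≥ N, ∀ α : ℝ, (2 : ℝ) ^ q < α →
      (μ {ω | α * upperQuantile ν (1 / n) ^ q ≤ |⨆ k : Fin n, X k ω| ^ q}).toReal ≤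
        (α ^ ((1 : ℝ) / q) / 2) ^ (-s) +
          ((∫ x, max (-x) 0 ∂ν) / α ^ ((1 : ℝ) / q)) ^ s := by
  intro q hq s hs
  set g := upperQuantile ν with hgdef
  set E := ∫ x, max (-x) 0 ∂ν with hEdef
  have hE0 : 0 ≤ E := integral_nonneg fun x => le_max_right _ _
  have hx : (0 : ℝ) < 2 ^ (-s) := Real.rpow_pos_of_pos two_pos _
  have hx1 : (2 : ℝ) ^ (-s) ≤ 1 :=
    Real.rpow_le_one_of_one_le_of_nonpos one_le_two (neg_nonpos.2 hs.le)
  have hsqrt2 : (1 : ℝ) < Real.sqrt 2 := by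
    rw [show (1 : ℝ) = Real.sqrt 1 from Real.sqrt_one.symm]
    exact Real.sqrt_lt_sqrt (by norm_num) (by norm_num)
  have h1 : ∀ᶠ t in nhdsWithin 0 (Set.Ioi 0),
      g (t * 2 ^ (-s)) / g t ≤ Real.sqrt 2 ∧ 1 ≤ g t :=
    ((hsv _ hx).eventually_le_const hsqrt2).and (hinfty.eventually (eventually_ge_atTop 1))
  rw [eventually_nhdsWithin_iff, Metric.eventually_nhds_iff] at h1
  obtain ⟨δ, hδ, hδprop⟩ := h1
  have hmemδ : ∀ t : ℝ, 0 < t → t < δ →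
      g (t * 2 ^ (-s)) / g t ≤ Real.sqrt 2 ∧ 1 ≤ g t := by
    intro t ht htδ
    exact hδprop (by rw [Real.dist_eq, sub_zero, abs_of_pos ht]; exact htδ) ht
  refine ⟨max (⌈1 / δ⌉₊ + 1) (⌈s⌉₊ + 1), fun n hn α hα => ?_⟩
  have hn1 : 1 ≤ n := le_trans (le_trans (Nat.le_add_left 1 _) (le_max_left _ _)) hn
  have hnR : (0 : ℝ) < n := by exact_mod_cast hn1
  have hδn : 1 / (n : ℝ) < δ := by
    have h1δ : 1 / δ < (n : ℝ) := by
      have : ⌈1 / δ⌉₊ < n := lt_of_lt_of_le (Nat.lt_succ_self _)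
        (le_trans (le_max_left _ _) hn)
      exact lt_of_le_of_lt (Nat.le_ceil _) (by exact_mod_cast this)
    rw [div_lt_iff₀ hnR]
    rw [div_lt_iff₀ hδ] at h1δ
    nlinarith
  have hsn : s ≤ (n : ℝ) := by
    have : ⌈s⌉₊ ≤ n := le_trans (le_trans (Nat.le_succ _) (le_max_right _ _)) hn
    exact le_trans (Nat.le_ceil _) (by exact_mod_cast this)
  set G := g (1 / (n : ℝ)) with hGdef
  have hG1 : 1 ≤ G := (hmemδ _ (by positivity) hδn).2
  -- iterated slow-variation bound
  have chain : ∀ j : ℕ, g ((2 ^ (-s)) ^ j * (1 / n)) ≤ Real.sqrt 2 ^ j * G := by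
    intro j
    induction j with
    | zero =>
        simp only [pow_zero, one_mul]
        exact le_rfl
    | succ j ih =>
      have htp : (0 : ℝ) < (2 ^ (-s)) ^ j * (1 / n) := by positivity
      have htle : (2 ^ (-s)) ^ j * (1 / (n : ℝ)) ≤ 1 / n := by
        calc (2 ^ (-s)) ^ j * (1 / (n : ℝ)) ≤ 1 * (1 / n) :=
              mul_le_mul_of_nonneg_right (pow_le_one₀ hx.le hx1) (by positivity)
          _ = 1 / n := one_mul _
      obtain ⟨hr, hg1⟩ := hmemδ _ htp (lt_of_le_of_lt htle hδn)
      have hgpos : 0 < g ((2 ^ (-s)) ^ j * (1 / n)) := lt_of_lt_of_le one_pos hg1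
      rw [div_le_iff₀ hgpos] at hr
      calc g ((2 ^ (-s)) ^ (j + 1) * (1 / n))
          = g ((2 ^ (-s)) ^ j * (1 / n) * 2 ^ (-s)) := by ring_nf
        _ ≤ Real.sqrt 2 * g ((2 ^ (-s)) ^ j * (1 / n)) := hr
        _ ≤ Real.sqrt 2 * (Real.sqrt 2 ^ j * G) :=
            mul_le_mul_of_nonneg_left ih (Real.sqrt_nonneg 2)
        _ = Real.sqrt 2 ^ (j + 1) * G := by ring
  set lam := α ^ ((1 : ℝ) / q) with hlamdef
  have hq0 : (q : ℝ) ≠ 0 := Nat.cast_ne_zero.2 (by omega)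
  have hαpos : (0 : ℝ) < α := lt_trans (by positivity) hα
  have h2lam : 2 < lam := by
    have h := Real.rpow_lt_rpow (by positivity) hα (show (0:ℝ) < (1:ℝ)/q by positivity)
    rwa [← Real.rpow_natCast 2 q, ← Real.rpow_mul (by norm_num : (0:ℝ) ≤ 2),
      mul_one_div, div_self hq0, Real.rpow_one] at h
  have hlampos : 0 < lam := lt_trans two_pos h2lam
  have hlamq : lam ^ q = α := by
    rw [hlamdef, ← Real.rpow_natCast (α ^ ((1 : ℝ) / q)) q, ← Real.rpow_mul hαpos.le,
      one_div, inv_mul_cancel₀ hq0, Real.rpow_one]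
  -- choose dyadic level j
  set J := ⌊Real.logb 2 lam⌋ with hJdef
  have hJ1 : 1 ≤ J := by
    rw [Int.le_floor]
    push_cast
    exact le_of_lt ((Real.lt_logb_iff_rpow_lt one_lt_two hlampos).2 (by
      rw [Real.rpow_one]; exact h2lam))
  set j := J.toNat with hjdef
  have hjJ : (j : ℤ) = J := Int.toNat_of_nonneg (by omega)
  have hj1 : 1 ≤ j := by omega
  have hjR : ((j : ℕ) : ℝ) = (J : ℝ) := by exact_mod_cast congrArg (fun z : ℤ => (z : ℝ)) hjJ
  have h2j_le : (2 : ℝ) ^ j ≤ lam := by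
    have h := Real.rpow_le_rpow_of_exponent_le one_le_two (Int.floor_le (Real.logb 2 lam))
    rw [Real.rpow_logb two_pos (by norm_num) hlampos] at h
    calc (2 : ℝ) ^ j = (2 : ℝ) ^ ((j : ℕ) : ℝ) := (Real.rpow_natCast 2 j).symm
      _ = (2 : ℝ) ^ ((J : ℝ)) := by rw [hjR]
      _ ≤ lam := h
  have hlam_lt : lam < (2 : ℝ) ^ (j + 1) := by
    have h := Real.rpow_lt_rpow_of_exponent_lt one_lt_two (Int.lt_floor_add_one (Real.logb 2 lam))
    rw [Real.rpow_logb two_pos (by norm_num) hlampos] at h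
    calc lam < (2 : ℝ) ^ ((J : ℝ) + 1) := h
      _ = (2 : ℝ) ^ (((j + 1 : ℕ)) : ℝ) := by rw [← hjR]; norm_num
      _ = (2 : ℝ) ^ (j + 1) := Real.rpow_natCast 2 (j + 1)
  set c := lam * G with hcdef
  have hcpos : 0 < c := mul_pos hlampos (lt_of_lt_of_le one_pos hG1)
  set U := ⋃ i ∈ Finset.range n, X i ⁻¹' Set.Ici c with hUdef
  set I := ⋂ i ∈ Finset.range n, X i ⁻¹' Set.Iic (-c) with hIdef
  have hincl : {ω | α * G ^ q ≤ |⨆ k : Fin n, X k ω| ^ q} ⊆ U ∪ I := by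
    intro ω hω
    simp only [Set.mem_setOf_eq] at hω
    have hcq : c ^ q ≤ |⨆ k : Fin n, X k ω| ^ q := by
      calc c ^ q = lam ^ q * G ^ q := mul_pow _ _ _
        _ = α * G ^ q := by rw [hlamq]
        _ ≤ _ := hω
    have habs : c ≤ |⨆ k : Fin n, X k ω| :=
      le_of_pow_le_pow_left₀ (by omega) (abs_nonneg _) hcq
    haveI : Nonempty (Fin n) := ⟨⟨0, by omega⟩⟩
    rcases le_abs.mp habs with hpos | hneg'
    · obtain ⟨k, hk⟩ := Finite.exists_max (fun k : Fin n => X k ω)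
      have hsup : (⨆ k : Fin n, X k ω) ≤ X k ω := ciSup_le hk
      left
      simp only [hUdef, Set.mem_iUnion, Set.mem_preimage, Set.mem_Ici]
      exact ⟨k.val, Finset.mem_range.2 k.isLt, le_trans hpos hsup⟩
    · right
      simp only [hIdef, Set.mem_iInter, Set.mem_preimage, Set.mem_Iic]
      intro i hi
      have hle : X i ω ≤ ⨆ k : Fin n, X k ω :=
        le_ciSup (f := fun k : Fin n => X (k : ℕ) ω)
          (Set.Finite.bddAbove (Set.finite_range _)) ⟨i, Finset.mem_range.1 hi⟩
      linarith
  rcases le_or_gt lam E with hEl | hEl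
  · -- trivial case: second term is ≥ 1
    have h1' : (1 : ℝ) ≤ (E / lam) ^ s :=
      Real.one_le_rpow (by rw [le_div_iff₀ hlampos]; nlinarith) hs.le
    have hμ1 : (μ {ω | α * G ^ q ≤ |⨆ k : Fin n, X k ω| ^ q}).toReal ≤ 1 := by
      have := prob_le_one (μ := μ) (s := {ω | α * G ^ q ≤ |⨆ k : Fin n, X k ω| ^ q})
      simpa using ENNReal.toReal_mono ENNReal.one_ne_top this
    have hnn : (0 : ℝ) ≤ (lam / 2) ^ (-s) := Real.rpow_nonneg (by positivity) _
    linarith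
  · -- main case
    have hνIci : ∀ i : ℕ, μ (X i ⁻¹' Set.Ici c) = ν (Set.Ici c) := fun i => by
      rw [← hlaw i, Measure.map_apply (hmeas i) measurableSet_Ici]
    have hνIic : ∀ i : ℕ, μ (X i ⁻¹' Set.Iic (-c)) = ν (Set.Iic (-c)) := fun i => by
      rw [← hlaw i, Measure.map_apply (hmeas i) measurableSet_Iic]
    -- upper tail bound
    have hqlt : (ν (Set.Ici c)).toReal < (2 ^ (-s)) ^ j * (1 / n) := by
      apply upperQuantile_spec (by positivity)
      calc upperQuantile ν ((2 ^ (-s)) ^ j * (1 / n)) ≤ Real.sqrt 2 ^ j * G := chain j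
        _ < (2 : ℝ) ^ j * G := by
            have : Real.sqrt 2 < 2 := by
              nlinarith [Real.sq_sqrt (by norm_num : (0:ℝ) ≤ 2), Real.sqrt_nonneg 2]
            exact mul_lt_mul_of_pos_right
              (pow_lt_pow_left₀ this (Real.sqrt_nonneg 2) (by omega)) (by linarith)
        _ ≤ lam * G := mul_le_mul_of_nonneg_right h2j_le (by linarith)
    have hmuU : (μ U).toReal ≤ (lam / 2) ^ (-s) := by
      have hUle : μ U ≤ (n : ENNReal) * ν (Set.Ici c) := by
        refine le_trans (measure_biUnion_finset_le _ _) ?_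
        simp only [hνIci, Finset.sum_const, Finset.card_range, nsmul_eq_mul]
        exact le_rfl
      have hUle' : (μ U).toReal ≤ (n : ℝ) * (ν (Set.Ici c)).toReal := by
        have := ENNReal.toReal_mono
          (ENNReal.mul_ne_top (ENNReal.natCast_ne_top n) (measure_ne_top ν _)) hUle
        rwa [ENNReal.toReal_mul, ENNReal.toReal_natCast] at this
      calc (μ U).toReal ≤ (n : ℝ) * (ν (Set.Ici c)).toReal := hUle'
        _ ≤ (n : ℝ) * ((2 ^ (-s)) ^ j * (1 / n)) :=
            mul_le_mul_of_nonneg_left hqlt.le (Nat.cast_nonneg n)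
        _ = (2 ^ (-s)) ^ j := by field_simp
        _ = ((2 : ℝ) ^ j) ^ (-s) := by
            rw [← Real.rpow_natCast ((2 : ℝ) ^ (-s)) j, ← Real.rpow_natCast (2 : ℝ) j,
              ← Real.rpow_mul (by norm_num : (0:ℝ) ≤ 2),
              ← Real.rpow_mul (by norm_num : (0:ℝ) ≤ 2), mul_comm]
        _ ≤ (lam / 2) ^ (-s) := by
            rw [Real.rpow_neg (by positivity), Real.rpow_neg (by positivity)]
            have hbase : lam / 2 ≤ (2 : ℝ) ^ j := by
              have : (2:ℝ) ^ (j + 1) = 2 ^ j * 2 := pow_succ 2 j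
              nlinarith
            have h2 : (lam / 2) ^ s ≤ ((2 : ℝ) ^ j) ^ s :=
              Real.rpow_le_rpow (by linarith) hbase hs.le
            exact inv_anti₀ (Real.rpow_pos_of_pos (by linarith) s) h2
    -- lower tail bound
    have hprod : μ I = ν (Set.Iic (-c)) ^ n := by
      rw [hIdef, hindep.measure_inter_preimage_eq_mul (Finset.range n)
        (sets := fun _ => Set.Iic (-c)) (fun i _ => measurableSet_Iic)]
      simp [hνIic]
    set p0 := (ν (Set.Iic (-c))).toReal with hp0def
    have hp0nonneg : 0 ≤ p0 := ENNReal.toReal_nonneg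
    have hμI : (μ I).toReal = p0 ^ n := by rw [hprod, ENNReal.toReal_pow]
    have hmarkov : c * (ν {x : ℝ | c ≤ max (-x) 0}).toReal ≤ E :=
      mul_meas_ge_le_integral_of_nonneg (ae_of_all _ fun x => le_max_right _ _) hneg c
    have hsub : Set.Iic (-c) ⊆ {x : ℝ | c ≤ max (-x) 0} := by
      intro x hx
      simp only [Set.mem_Iic] at hx
      exact le_trans (by linarith) (le_max_left (-x) 0)
    have hp0le : p0 ≤ E / c := by
      rw [le_div_iff₀ hcpos]
      have h1' : p0 ≤ (ν {x : ℝ | c ≤ max (-x) 0}).toReal :=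
        ENNReal.toReal_mono (measure_ne_top ν _) (measure_mono hsub)
      calc p0 * c ≤ (ν {x : ℝ | c ≤ max (-x) 0}).toReal * c :=
            mul_le_mul_of_nonneg_right h1' hcpos.le
        _ = c * (ν {x : ℝ | c ≤ max (-x) 0}).toReal := mul_comm _ _
        _ ≤ E := hmarkov
    have hclam : lam ≤ c := le_mul_of_one_le_right hlampos.le hG1
    have hEc : E / c ≤ E / lam := div_le_div_of_nonneg_left hE0 hlampos hclam
    have hmuI : (μ I).toReal ≤ (E / lam) ^ s := by
      rcases eq_or_lt_of_le hE0 with hE0' | hEpos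
      · have hp00 : p0 = 0 := le_antisymm
          (le_trans hp0le (le_trans hEc (by rw [← hE0', zero_div]))) hp0nonneg
        rw [hμI, hp00, zero_pow (by omega), ← hE0', zero_div,
          Real.zero_rpow hs.ne']
      · have hxpos : 0 < E / lam := div_pos hEpos hlampos
        have hxlt1 : E / lam < 1 := (div_lt_one hlampos).2 hEl
        calc (μ I).toReal = p0 ^ n := hμI
          _ ≤ (E / lam) ^ n := pow_le_pow_left₀ hp0nonneg (hp0le.trans hEc) n
          _ = (E / lam) ^ ((n : ℕ) : ℝ) := (Real.rpow_natCast _ n).symm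
          _ ≤ (E / lam) ^ s := Real.rpow_le_rpow_of_exponent_ge hxpos hxlt1.le hsn
    calc (μ {ω | α * G ^ q ≤ |⨆ k : Fin n, X k ω| ^ q}).toReal
        ≤ ((μ U) + (μ I)).toReal := ENNReal.toReal_mono
          (ENNReal.add_ne_top.2 ⟨measure_ne_top μ _, measure_ne_top μ _⟩) (le_trans (measure_mono hincl) (measure_union_le _ _))
      _ = (μ U).toReal + (μ I).toReal :=
          ENNReal.toReal_add (measure_ne_top μ _) (measure_ne_top μ _)
      _ ≤ (lam / 2) ^ (-s) + (E / lam) ^ s := add_le_add hmuU hmuI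
end

section
/- Uniform second-moment bound: under the assumptions E[X⁻] < ∞, g slowly varying at 0, and g(p) → ∞ as p → 0+, there exist a constant C and N such that for all n ≥ N, Var(M_n) ≤ E[M_n²] ≤ C · g(1/n)², where M_n is the maximum of n i.i.d. copies of X. -/
open MeasureTheory ProbabilityTheory Filter

open Set
open scoped ENNReal NNReal

namespace SMaux

variable (ν : Measure ℝ) [IsProbabilityMeasure ν]

lemma uq_nonempty {p : ℝ} (hp : 0 < p) :
    {r : ℝ | (ν (Set.Ici r)).toReal < p}.Nonempty := by
  have h0 : Tendsto (fun n : ℕ => ν (Ici (n : ℝ))) atTop (nhds (ν (⋂ n : ℕ, Ici (n : ℝ)))) := by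
    apply tendsto_measure_iInter_atTop
    · exact fun n => (measurableSet_Ici).nullMeasurableSet
    · intro a b hab
      exact Ici_subset_Ici.2 (by exact_mod_cast hab)
    · exact ⟨0, measure_ne_top ν _⟩
  have hempty : (⋂ n : ℕ, Ici (n : ℝ)) = ∅ := by
    ext x
    simp only [mem_iInter, mem_Ici, mem_empty_iff_false, iff_false, not_forall, not_le]
    obtain ⟨n, hn⟩ := exists_nat_gt x
    exact ⟨n, hn⟩
  rw [hempty, measure_empty] at h0
  have h1 : Tendsto (fun n : ℕ => (ν (Ici (n : ℝ))).toReal) atTop (nhds 0) := by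
    have := (ENNReal.tendsto_toReal (ENNReal.zero_ne_top)).comp h0
    simpa [Function.comp_def] using this
  have h2 : ∀ᶠ n : ℕ in atTop, (ν (Ici (n : ℝ))).toReal < p :=
    h1.eventually (eventually_lt_nhds hp)
  obtain ⟨n, hn⟩ := h2.exists
  exact ⟨n, hn⟩

lemma uq_mem {p : ℝ} (hp : 0 < p) {u : ℝ} (hu : upperQuantile ν p < u) :
    (ν (Set.Ici u)).toReal < p := by
  have hne := uq_nonempty ν hp
  have : ∃ s ∈ {r : ℝ | (ν (Set.Ici r)).toReal < p}, s < u := by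
    by_cases hbdd : BddBelow {r : ℝ | (ν (Set.Ici r)).toReal < p}
    · exact (csInf_lt_iff hbdd hne).mp hu
    · obtain ⟨y, hy, hyu⟩ := not_bddBelow_iff.mp hbdd u
      exact ⟨y, hy, hyu⟩
  obtain ⟨s, hs, hsu⟩ := this
  calc (ν (Set.Ici u)).toReal ≤ (ν (Set.Ici s)).toReal := by
        apply ENNReal.toReal_mono (measure_ne_top ν _)
        exact measure_mono (Ici_subset_Ici.2 hsu.le)
    _ < p := hs

lemma meas_Ioi_le {p : ℝ} (hp : 0 < p) {t : ℝ} (ht : upperQuantile ν p ≤ t) :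
    ν (Set.Ioi t) ≤ ENNReal.ofReal p := by
  have hsub : Set.Ioi t = ⋃ m : ℕ, Set.Ici (t + 1 / (m + 1)) := by
    ext x
    simp only [mem_Ioi, mem_iUnion, mem_Ici]
    constructor
    · intro hx
      obtain ⟨m, hm⟩ := exists_nat_one_div_lt (sub_pos.2 hx)
      exact ⟨m, by push_cast at hm ⊢; linarith⟩
    · rintro ⟨m, hm⟩
      have : (0:ℝ) < 1 / (m + 1) := by positivity
      linarith
  rw [hsub]
  have hdir : Directed (· ⊆ ·) (fun m : ℕ => Set.Ici (t + 1 / (m + 1 : ℝ))) := by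
    intro a b
    rcases le_total a b with h | h
    · refine ⟨b, ?_, subset_rfl⟩
      apply Ici_subset_Ici.2
      have : (1:ℝ) / (b + 1) ≤ 1 / (a + 1) := by
        apply one_div_le_one_div_of_le (by positivity)
        exact_mod_cast Nat.add_le_add_right h 1
      linarith
    · refine ⟨a, subset_rfl, ?_⟩
      apply Ici_subset_Ici.2
      have : (1:ℝ) / (a + 1) ≤ 1 / (b + 1) := by
        apply one_div_le_one_div_of_le (by positivity)
        exact_mod_cast Nat.add_le_add_right h 1
      linarith
  rw [hdir.measure_iUnion]
  apply iSup_le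
  intro m
  have h1 : upperQuantile ν p < t + 1 / (m + 1) := lt_of_le_of_lt ht (lt_add_of_pos_right t (by positivity))
  have := uq_mem ν hp h1
  rw [← ENNReal.ofReal_toReal (measure_ne_top ν _)]
  exact ENNReal.ofReal_le_ofReal this.le



/-- geometric tsum in ENNReal -/
lemma tsum_ofReal_geom {c r : ℝ} (hc : 0 ≤ c) (h0 : 0 ≤ r) (h1 : r < 1) :
    ∑' k : ℕ, ENNReal.ofReal (c * r ^ k) = ENNReal.ofReal (c * (1 - r)⁻¹) := by
  have : ∀ k : ℕ, ENNReal.ofReal (c * r ^ k) = ENNReal.ofReal c * (ENNReal.ofReal r) ^ k := by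
    intro k
    rw [ENNReal.ofReal_mul hc, ENNReal.ofReal_pow h0]
  simp_rw [this]
  rw [ENNReal.tsum_mul_left, ENNReal.tsum_geometric]
  have h2 : (1 : ℝ≥0∞) - ENNReal.ofReal r = ENNReal.ofReal (1 - r) := by
    rw [ENNReal.ofReal_sub 1 h0, ENNReal.ofReal_one]
  rw [h2, ← ENNReal.ofReal_inv_of_pos (by linarith), ← ENNReal.ofReal_mul hc]

/-- decomposition of the lintegral over (0,∞) into geometric pieces -/
lemma lintegral_Ioi_le_pieces (F : ℝ → ℝ≥0∞) {b r : ℝ} (hb : 0 < b) (hr : 1 < r) :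
    ∫⁻ s in Set.Ioi (0:ℝ), F s ≤
      (∫⁻ s in Set.Ioc 0 b, F s) +
        ∑' k : ℕ, ∫⁻ s in Set.Ioc (b * r ^ k) (b * r ^ (k+1)), F s := by
  have hsub : Set.Ioi (0:ℝ) ⊆
      Set.Ioc 0 b ∪ ⋃ k : ℕ, Set.Ioc (b * r ^ k) (b * r ^ (k+1)) := by
    intro s hs
    rcases le_or_gt s b with h | h
    · exact Or.inl ⟨hs, h⟩
    · right
      have htend : Tendsto (fun k : ℕ => b * r ^ k) atTop atTop :=
        (tendsto_pow_atTop_atTop_of_one_lt hr).const_mul_atTop hb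
      have hex : ∃ k : ℕ, s ≤ b * r ^ k := (htend.eventually_ge_atTop s).exists
      classical
      set j := Nat.find hex with hj
      have hjs : s ≤ b * r ^ j := Nat.find_spec hex
      have hj0 : j ≠ 0 := by
        intro h0
        rw [h0] at hjs
        simp only [pow_zero, mul_one] at hjs
        linarith
      obtain ⟨k, hk⟩ := Nat.exists_eq_succ_of_ne_zero hj0
      have hlt : ¬ (s ≤ b * r ^ k) := Nat.find_min hex (by omega)
      exact Set.mem_iUnion.2 ⟨k, ⟨lt_of_not_ge hlt, by rw [show k+1 = j by omega]; exact hjs⟩⟩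
  calc ∫⁻ s in Set.Ioi (0:ℝ), F s
      ≤ ∫⁻ s in Set.Ioc 0 b ∪ ⋃ k : ℕ, Set.Ioc (b * r ^ k) (b * r ^ (k+1)), F s :=
        lintegral_mono_set hsub
    _ ≤ (∫⁻ s in Set.Ioc 0 b, F s) +
        ∫⁻ s in ⋃ k : ℕ, Set.Ioc (b * r ^ k) (b * r ^ (k+1)), F s :=
        lintegral_union_le _ _ _
    _ ≤ _ := by
        gcongr
        exact lintegral_iUnion_le _ _

/-- piece bound -/
lemma piece_bound (F : ℝ → ℝ≥0∞) {a b : ℝ} {c : ℝ≥0∞}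
    (h : ∀ s, a < s → s ≤ b → F s ≤ c) :
    ∫⁻ s in Set.Ioc a b, F s ≤ c * ENNReal.ofReal (b - a) := by
  calc ∫⁻ s in Set.Ioc a b, F s ≤ ∫⁻ _ in Set.Ioc a b, c :=
        setLIntegral_mono measurable_const (fun s hs => h s hs.1 hs.2)
    _ = c * ENNReal.ofReal (b - a) := by rw [setLIntegral_const, Real.volume_Ioc]

/-- dyadic iteration for slowly varying functions -/
lemma dyadic_iter (g : ℝ → ℝ) {t₀ : ℝ}
    (h : ∀ t : ℝ, 0 < t → t ≤ t₀ → g (t / 2) ≤ 5 / 4 * g t ∧ 1 ≤ g t) :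
    ∀ (k : ℕ) (t : ℝ), 0 < t → t ≤ t₀ → g (t / 2 ^ k) ≤ (5 / 4) ^ k * g t := by
  intro k
  induction k with
  | zero => intro t ht ht0; simp
  | succ k ih =>
      intro t ht ht0
      have ht2 : 0 < t / 2 := by linarith
      have ht20 : t / 2 ≤ t₀ := by linarith
      have h1 := ih (t / 2) ht2 ht20
      have h2 := (h t ht ht0).1
      have heq : t / 2 ^ (k + 1) = (t / 2) / 2 ^ k := by ring
      rw [heq]
      calc g ((t / 2) / 2 ^ k) ≤ (5/4) ^ k * g (t / 2) := h1
        _ ≤ (5/4) ^ k * (5/4 * g t) := by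
            apply mul_le_mul_of_nonneg_left h2 (by positivity)
        _ = (5/4) ^ (k+1) * g t := by ring


end SMaux

/-- Uniform second-moment bound: under `E[X⁻] < ∞`, `g` slowly varying at `0` and
`g(0+) = +∞`, there exist `C` and `N` such that for all `n ≥ N`,
`Var(Mₙ) ≤ E[Mₙ²] ≤ C · g(1/n)²`. -/
theorem sampleMax_secondMoment_bound
    {Ω : Type*} [MeasurableSpace Ω] (μ : Measure Ω) [IsProbabilityMeasure μ]
    (ν : Measure ℝ) [IsProbabilityMeasure ν]
    (X : ℕ → Ω → ℝ) (hmeas : ∀ k, Measurable (X k))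
    (hindep : iIndepFun X μ)
    (hlaw : ∀ k, Measure.map (X k) μ = ν)
    (hneg : Integrable (fun x => max (-x) 0) ν)
    (hsv : SlowlyVaryingAtZero (upperQuantile ν))
    (hinfty : Tendsto (upperQuantile ν) (nhdsWithin 0 (Set.Ioi 0)) atTop) :
    ∃ C : ℝ, ∃ N : ℕ, ∀ n ≥ N,
      variance (fun ω => ⨆ k : Fin n, X k ω) μ ≤
        ∫ ω, (⨆ k : Fin n, X k ω) ^ 2 ∂μ ∧
      ∫ ω, (⨆ k : Fin n, X k ω) ^ 2 ∂μ ≤ C * upperQuantile ν (1 / n) ^ 2 := by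
  classical
  -- Step 1: find t₀
  have hhalf := hsv (1/2) (by norm_num)
  have hev1 : ∀ᶠ t in nhdsWithin 0 (Set.Ioi 0),
      upperQuantile ν (t * (1/2)) / upperQuantile ν t ≤ 5/4 :=
    hhalf.eventually (eventually_le_nhds (by norm_num))
  have hev2 : ∀ᶠ t in nhdsWithin 0 (Set.Ioi 0), 1 ≤ upperQuantile ν t :=
    hinfty.eventually_ge_atTop 1
  have hev := hev1.and hev2
  rw [eventually_nhdsWithin_iff, Metric.eventually_nhds_iff] at hev
  obtain ⟨ε, hε, hevp⟩ := hev
  set t₀ : ℝ := ε / 2 with ht₀def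
  have ht₀pos : 0 < t₀ := by positivity
  have hprop : ∀ t : ℝ, 0 < t → t ≤ t₀ →
      upperQuantile ν (t / 2) ≤ 5/4 * upperQuantile ν t ∧ 1 ≤ upperQuantile ν t := by
    intro t ht ht0
    have hdist : dist t 0 < ε := by
      rw [Real.dist_eq, sub_zero, abs_of_pos ht]; linarith
    obtain ⟨h1, h2⟩ := hevp hdist ht
    have hpos : (0:ℝ) < upperQuantile ν t := lt_of_lt_of_le zero_lt_one h2
    rw [div_le_iff₀ hpos] at h1
    rw [mul_one_div] at h1
    exact ⟨by linarith [h1], h2⟩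
  -- constants
  set m : ℝ := (∫ x, max (-x) 0 ∂ν) + 1 with hmdef
  have hm1 : 1 ≤ m := by
    have : 0 ≤ ∫ x, max (-x) 0 ∂ν := integral_nonneg fun x => le_max_right _ _
    linarith
  have hm0 : 0 < m := lt_of_lt_of_le zero_lt_one hm1
  refine ⟨4 + 5 * m^2, max 4 (⌈t₀⁻¹⌉₊ + 1), ?_⟩
  intro n hn
  have hn4 : 4 ≤ n := le_trans (le_max_left _ _) hn
  have hn1 : 0 < n := by omega
  have hnR : (0:ℝ) < n := by exact_mod_cast hn1
  have hnt : (1:ℝ)/n ≤ t₀ := by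
    have h1 : (⌈t₀⁻¹⌉₊ + 1 : ℕ) ≤ n := le_trans (le_max_right _ _) hn
    have h2 : t₀⁻¹ ≤ (n:ℝ) := by
      calc t₀⁻¹ ≤ (⌈t₀⁻¹⌉₊ : ℝ) := Nat.le_ceil _
        _ ≤ (n:ℝ) := by exact_mod_cast le_trans (Nat.le_succ _) h1
    rw [div_le_iff₀ hnR]
    have : t₀ * t₀⁻¹ ≤ t₀ * n := by nlinarith
    rw [mul_inv_cancel₀ ht₀pos.ne'] at this
    linarith
  haveI : Nonempty (Fin n) := ⟨⟨0, hn1⟩⟩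
  set M : Ω → ℝ := fun ω => ⨆ k : Fin n, X k ω with hMdef
  have hMmeas : Measurable M := Measurable.iSup (fun k => hmeas k)
  have hbdd : ∀ ω, BddAbove (Set.range fun k : Fin n => X k ω) :=
    fun ω => (Set.finite_range _).bddAbove
  set g : ℝ := upperQuantile ν (1/n) with hgdef
  have hg1 : 1 ≤ g := (hprop (1/n) (by positivity) hnt).2
  have hg0 : 0 < g := lt_of_lt_of_le zero_lt_one hg1
  -- positive tail bound
  have hgk : ∀ k : ℕ, upperQuantile ν ((1/n) / 2^k) ≤ (5/4)^k * g :=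
    fun k => SMaux.dyadic_iter (upperQuantile ν) hprop k (1/n) (by positivity) hnt
  have hpos : ∀ (k : ℕ) (t : ℝ), (5/4:ℝ)^k * g ≤ t →
      μ {ω | t < M ω} ≤ ENNReal.ofReal ((2⁻¹:ℝ)^k) := by
    intro k t ht
    have hsub : {ω | t < M ω} ⊆ ⋃ j : Fin n, X j ⁻¹' (Set.Ioi t) := by
      intro ω hω
      obtain ⟨j, hj⟩ := (lt_ciSup_iff (hbdd ω)).mp hω
      exact Set.mem_iUnion.2 ⟨j, hj⟩
    calc μ {ω | t < M ω} ≤ μ (⋃ j : Fin n, X j ⁻¹' (Set.Ioi t)) := measure_mono hsub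
      _ ≤ ∑ j : Fin n, μ (X j ⁻¹' (Set.Ioi t)) := measure_iUnion_fintype_le _ _
      _ = ∑ _j : Fin n, ν (Set.Ioi t) := by
          refine Finset.sum_congr rfl fun j _ => ?_
          rw [← hlaw j, Measure.map_apply (hmeas j) measurableSet_Ioi]
      _ = (n : ℝ≥0∞) * ν (Set.Ioi t) := by
          rw [Finset.sum_const, Finset.card_univ, Fintype.card_fin, nsmul_eq_mul]
      _ ≤ (n : ℝ≥0∞) * ENNReal.ofReal ((1/n) / 2^k) := by
          gcongr
          exact SMaux.meas_Ioi_le ν (by positivity) (le_trans (hgk k) ht)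
      _ = ENNReal.ofReal ((2⁻¹:ℝ)^k) := by
          rw [← ENNReal.ofReal_natCast n, ← ENNReal.ofReal_mul (by positivity)]
          congr 1
          rw [inv_pow]
          field_simp
  -- negative tail bound
  have hmark : ∀ t : ℝ, 0 < t → ν (Set.Iio (-t)) ≤ ENNReal.ofReal (m / t) := by
    intro t ht
    have hsub : Set.Iio (-t) ⊆ {x : ℝ | t ≤ max (-x) 0} := by
      intro x hx
      simp only [Set.mem_Iio] at hx
      simp only [Set.mem_setOf_eq]
      have : t < -x := by linarith
      exact le_trans this.le (le_max_left _ _)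
    have hmk := mul_meas_ge_le_integral_of_nonneg
      (μ := ν) (f := fun x => max (-x) 0) (ae_of_all _ fun x => le_max_right _ _) hneg t
    have h1 : (ν (Set.Iio (-t))).toReal ≤ (ν {x : ℝ | t ≤ max (-x) 0}).toReal :=
      ENNReal.toReal_mono (measure_ne_top _ _) (measure_mono hsub)
    have h2 : (ν (Set.Iio (-t))).toReal ≤ m / t := by
      rw [le_div_iff₀ ht]
      rw [measureReal_def] at hmk
      nlinarith [h1, hmk]
    exact (ENNReal.le_ofReal_iff_toReal_le (measure_ne_top _ _) (by positivity)).mpr h2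
  have hprod : ∀ t : ℝ, μ {ω | M ω < -t} ≤ ν (Set.Iio (-t)) ^ n := by
    intro t
    have hsub : {ω | M ω < -t} ⊆ ⋂ i ∈ Finset.range n, X i ⁻¹' (Set.Iio (-t)) := by
      intro ω hω
      simp only [Set.mem_iInter]
      intro i hi
      have hle : X i ω ≤ M ω := le_ciSup (hbdd ω) (⟨i, Finset.mem_range.mp hi⟩ : Fin n)
      exact lt_of_le_of_lt hle hω
    calc μ {ω | M ω < -t} ≤ μ (⋂ i ∈ Finset.range n, X i ⁻¹' (Set.Iio (-t))) :=
          measure_mono hsub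
      _ = ∏ i ∈ Finset.range n, μ (X i ⁻¹' (Set.Iio (-t))) :=
          hindep.meas_biInter (fun i _ => ⟨Set.Iio (-t), measurableSet_Iio, rfl⟩)
      _ = ∏ _i ∈ Finset.range n, ν (Set.Iio (-t)) := by
          refine Finset.prod_congr rfl fun i _ => ?_
          rw [← hlaw i, Measure.map_apply (hmeas i) measurableSet_Iio]
      _ = ν (Set.Iio (-t)) ^ n := by rw [Finset.prod_const, Finset.card_range]
  -- layer cake
  set P : ℝ → ℝ≥0∞ := fun s => μ {ω | Real.sqrt s < M ω} with hPdef
  set Q : ℝ → ℝ≥0∞ := fun s => μ {ω | M ω < -Real.sqrt s} with hQdef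
  have hPanti : Antitone P := by
    intro s s' hss
    exact measure_mono fun ω hω => lt_of_le_of_lt (Real.sqrt_le_sqrt hss) hω
  have hQanti : Antitone Q := by
    intro s s' hss
    apply measure_mono
    intro ω hω
    simp only [Set.mem_setOf_eq] at hω ⊢
    exact lt_of_lt_of_le hω (neg_le_neg (Real.sqrt_le_sqrt hss))
  have hlayer : ∫⁻ ω, ENNReal.ofReal ((M ω)^2) ∂μ =
      ∫⁻ s in Set.Ioi (0:ℝ), μ {ω | s < (M ω)^2} :=
    lintegral_eq_lintegral_meas_lt μ (ae_of_all _ fun ω => sq_nonneg _)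
      ((hMmeas.pow_const 2).aemeasurable)
  have hsplit : ∫⁻ s in Set.Ioi (0:ℝ), μ {ω | s < (M ω)^2} ≤
      (∫⁻ s in Set.Ioi (0:ℝ), P s) + ∫⁻ s in Set.Ioi (0:ℝ), Q s := by
    have hmeasPQ : Measurable fun s => P s + Q s :=
      hPanti.measurable.add hQanti.measurable
    calc ∫⁻ s in Set.Ioi (0:ℝ), μ {ω | s < (M ω)^2}
        ≤ ∫⁻ s in Set.Ioi (0:ℝ), (P s + Q s) := by
          refine setLIntegral_mono hmeasPQ fun s hs => ?_
          have hsub : {ω | s < (M ω)^2} ⊆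
              {ω | Real.sqrt s < M ω} ∪ {ω | M ω < -Real.sqrt s} := by
            intro ω hω
            have h1 : Real.sqrt s < |M ω| := by
              have := Real.sqrt_lt_sqrt (le_of_lt hs) hω
              rwa [Real.sqrt_sq_eq_abs] at this
            rcases lt_abs.mp h1 with h | h
            · exact Or.inl h
            · refine Or.inr ?_
              simp only [Set.mem_setOf_eq]
              linarith
          exact le_trans (measure_mono hsub) (measure_union_le _ _)
      _ = _ := lintegral_add_left hPanti.measurable _
  -- bound on the P integral
  have hPbound : ∫⁻ s in Set.Ioi (0:ℝ), P s ≤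
      ENNReal.ofReal (g^2) + ENNReal.ofReal ((9/16*g^2) * (1 - 25/32)⁻¹) := by
    have hp := SMaux.lintegral_Ioi_le_pieces P (b := g^2) (r := 25/16)
      (by positivity) (by norm_num)
    refine le_trans hp (add_le_add ?_ ?_)
    · have h1 : ∫⁻ s in Set.Ioc (0:ℝ) (g^2), P s ≤ 1 * ENNReal.ofReal (g^2 - 0) :=
        SMaux.piece_bound P (fun s _ _ => prob_le_one)
      simpa using h1
    · refine le_trans (ENNReal.tsum_le_tsum fun k => ?_)
        (le_of_eq (SMaux.tsum_ofReal_geom (by positivity) (by norm_num) (by norm_num)))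
      have hb : ∀ s, g^2 * (25/16)^k < s → s ≤ g^2 * (25/16)^(k+1) →
          P s ≤ ENNReal.ofReal ((2⁻¹:ℝ)^k) := by
        intro s hs _
        apply hpos k
        have hy : (0:ℝ) ≤ (5/4)^k * g := by positivity
        have hsq : ((5/4:ℝ)^k * g)^2 = g^2 * (25/16)^k := by
          have h : (((5:ℝ)/4)^k)^2 = (25/16)^k := by
            rw [← pow_mul, mul_comm, pow_mul]; norm_num
          rw [mul_pow, h]; ring
        have := (Real.lt_sqrt hy).mpr (by rw [hsq]; exact hs)
        exact this.le
      have e2 : (2⁻¹:ℝ)^k * (g^2*(25/16)^(k+1) - g^2*(25/16)^k) = (9/16*g^2) * (25/32)^k := by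
        have h : ((25:ℝ)/32)^k = 2⁻¹^k * (25/16)^k := by rw [← mul_pow]; norm_num
        rw [h, pow_succ]; ring
      calc ∫⁻ s in Set.Ioc (g^2 * (25/16)^k) (g^2 * (25/16)^(k+1)), P s
          ≤ ENNReal.ofReal ((2⁻¹:ℝ)^k) *
              ENNReal.ofReal (g^2*(25/16)^(k+1) - g^2*(25/16)^k) :=
            SMaux.piece_bound P hb
        _ = ENNReal.ofReal ((9/16*g^2) * (25/32)^k) := by
            rw [← ENNReal.ofReal_mul (by positivity), e2]
  -- bound on the Q integral
  have hQk : ∀ (k : ℕ) (s : ℝ), 4*m^2*4^k < s → Q s ≤ ENNReal.ofReal ((16⁻¹:ℝ)^(k+1)) := by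
    intro k s hs
    have hy : (0:ℝ) < 2^(k+1)*m := by positivity
    have hsq : ((2:ℝ)^(k+1)*m)^2 = 4*m^2*4^k := by
      have h : (((2:ℝ))^(k+1))^2 = 4^(k+1) := by
        rw [← pow_mul, mul_comm, pow_mul]; norm_num
      rw [mul_pow, h, pow_succ]; ring
    have hsqrt : 2^(k+1)*m < Real.sqrt s := (Real.lt_sqrt hy.le).mpr (by rw [hsq]; exact hs)
    have hsqrtpos : 0 < Real.sqrt s := lt_trans hy hsqrt
    have h1 : ν (Set.Iio (-Real.sqrt s)) ≤ ENNReal.ofReal ((2⁻¹:ℝ)^(k+1)) := by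
      refine le_trans (hmark _ hsqrtpos) (ENNReal.ofReal_le_ofReal ?_)
      rw [div_le_iff₀ hsqrtpos]
      have h2 : (2⁻¹:ℝ)^(k+1) * (2^(k+1)*m) = m := by
        rw [inv_pow, ← mul_assoc, inv_mul_cancel₀ (by positivity)]; ring
      nlinarith [mul_le_mul_of_nonneg_left hsqrt.le
        (show (0:ℝ) ≤ 2⁻¹^(k+1) by positivity)]
    calc Q s ≤ ν (Set.Iio (-Real.sqrt s)) ^ n := hprod _
      _ ≤ (ENNReal.ofReal ((2⁻¹:ℝ)^(k+1))) ^ n := pow_le_pow_left' h1 n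
      _ ≤ (ENNReal.ofReal ((2⁻¹:ℝ)^(k+1))) ^ 4 := by
          apply pow_le_pow_right_of_le_one' _ hn4
          rw [ENNReal.ofReal_le_one]
          apply pow_le_one₀ <;> norm_num
      _ = ENNReal.ofReal ((16⁻¹:ℝ)^(k+1)) := by
          rw [← ENNReal.ofReal_pow (by positivity)]
          congr 1
          rw [← pow_mul, mul_comm, pow_mul]
          norm_num
  have hQbound : ∫⁻ s in Set.Ioi (0:ℝ), Q s ≤
      ENNReal.ofReal (4*m^2) + ENNReal.ofReal ((3/4*m^2) * (1 - 1/4)⁻¹) := by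
    have hq := SMaux.lintegral_Ioi_le_pieces Q (b := 4*m^2) (r := 4)
      (by positivity) (by norm_num)
    refine le_trans hq (add_le_add ?_ ?_)
    · have h1 : ∫⁻ s in Set.Ioc (0:ℝ) (4*m^2), Q s ≤ 1 * ENNReal.ofReal (4*m^2 - 0) :=
        SMaux.piece_bound Q (fun s _ _ => prob_le_one)
      simpa using h1
    · refine le_trans (ENNReal.tsum_le_tsum fun k => ?_)
        (le_of_eq (SMaux.tsum_ofReal_geom (by positivity) (by norm_num) (by norm_num)))
      have e1 : (16⁻¹:ℝ)^(k+1) * (4*m^2*4^(k+1) - 4*m^2*4^k) = (3/4*m^2) * (1/4)^k := by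
        have h : ((1:ℝ)/4)^k = 16⁻¹^k * 4^k := by rw [← mul_pow]; norm_num
        rw [h, pow_succ, pow_succ]; ring
      calc ∫⁻ s in Set.Ioc (4*m^2*4^k) (4*m^2*4^(k+1)), Q s
          ≤ ENNReal.ofReal ((16⁻¹:ℝ)^(k+1)) *
              ENNReal.ofReal (4*m^2*4^(k+1) - 4*m^2*4^k) :=
            SMaux.piece_bound Q (fun s hs _ => hQk k s hs)
        _ = ENNReal.ofReal ((3/4*m^2) * (1/4)^k) := by
            rw [← ENNReal.ofReal_mul (by positivity), e1]
  -- total bound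
  have htotal : ∫⁻ ω, ENNReal.ofReal ((M ω)^2) ∂μ ≤
      ENNReal.ofReal ((4 + 5*m^2) * g^2) := by
    rw [hlayer]
    have hgs : (1:ℝ) ≤ g^2 := by nlinarith
    calc ∫⁻ s in Set.Ioi (0:ℝ), μ {ω | s < (M ω)^2}
        ≤ (∫⁻ s in Set.Ioi (0:ℝ), P s) + ∫⁻ s in Set.Ioi (0:ℝ), Q s := hsplit
      _ ≤ (ENNReal.ofReal (g^2) + ENNReal.ofReal ((9/16*g^2) * (1 - 25/32)⁻¹)) +
          (ENNReal.ofReal (4*m^2) + ENNReal.ofReal ((3/4*m^2) * (1 - 1/4)⁻¹)) :=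
          add_le_add hPbound hQbound
      _ = ENNReal.ofReal ((g^2 + (9/16*g^2) * (1 - 25/32)⁻¹) +
          (4*m^2 + (3/4*m^2) * (1 - 1/4)⁻¹)) := by
          rw [ENNReal.ofReal_add (by positivity) (by positivity),
            ENNReal.ofReal_add (by positivity) (by positivity),
            ENNReal.ofReal_add (by positivity) (by positivity)]
      _ ≤ ENNReal.ofReal ((4 + 5*m^2) * g^2) := by
          apply ENNReal.ofReal_le_ofReal
          nlinarith [mul_le_mul_of_nonneg_left hgs (show (0:ℝ) ≤ 5*m^2 by positivity)]
  -- integrability and conclusion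
  have hmsq : AEStronglyMeasurable (fun ω => (M ω)^2) μ :=
    ((hMmeas.pow_const 2).aestronglyMeasurable)
  have hieq : ∫ ω, (M ω)^2 ∂μ = (∫⁻ ω, ENNReal.ofReal ((M ω)^2) ∂μ).toReal :=
    integral_eq_lintegral_of_nonneg_ae (ae_of_all _ fun ω => sq_nonneg _) hmsq
  have hC0 : (0:ℝ) ≤ (4 + 5*m^2) * g^2 := by positivity
  have hfinal : ∫ ω, (M ω)^2 ∂μ ≤ (4 + 5*m^2) * g^2 := by
    rw [hieq]
    calc (∫⁻ ω, ENNReal.ofReal ((M ω)^2) ∂μ).toReal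
        ≤ (ENNReal.ofReal ((4 + 5*m^2) * g^2)).toReal :=
          ENNReal.toReal_mono ENNReal.ofReal_ne_top htotal
      _ = (4 + 5*m^2) * g^2 := ENNReal.toReal_ofReal hC0
  constructor
  · have hvar := variance_le_expectation_sq (μ := μ) (X := M) hMmeas.aestronglyMeasurable
    exact hvar
  · exact hfinal
end
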